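/- arXiv:2004.10048 — 4 statements merged into one kernel-verified Lean document; each statement's English description precedes it below -/
import Mathlib

section
/- Let G' be a finite simple graph with a distinguished vertex v' and a set S of Steiner vertices not containing v', and let T' be a spanning tree of G' satisfying the degree-one condition. Let C be a cycle in G' of length |C| ≥ 4 passing through v' whose two edges incident to v' are {v', s_i} and {v', s_j} for distinct Steiner vertices s_i, s_j ∈ S, such that {s_i, s_j} is an edge of G' not belonging to C. Then the number of edges of C that belong to T' is at most |C| − 2 − [the edge {s_i, s_j} belongs to T'], where the bracket is 1 if {s_i, s_j} is an edge of T' and 0 otherwise. (This is the validity of constraint (10), Proposition 1.) -/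
open SimpleGraph

lemma filter_count_aux {α : Type*} {l : List α} (hl : l.Nodup) (p : α → Prop) [DecidablePred p]
    (s : Finset α) (hs : ∀ e ∈ s, e ∈ l ∧ ¬ p e) :
    (l.filter (fun e => p e)).length ≤ l.length - s.card := by
  classical
  have h1 : l.length = (l.filter (fun e => p e)).length + (l.filter (fun e => ¬ p e)).length := by
    rw [← List.countP_eq_length_filter, ← List.countP_eq_length_filter]
    simpa using List.length_eq_countP_add_countP (fun e => decide (p e)) (l := l)
  have h2 : s.card ≤ (l.filter (fun e => ¬ p e)).length := by
    rw [← List.toFinset_card_of_nodup (hl.filter _)]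
    apply Finset.card_le_card
    intro e he
    simp only [List.mem_toFinset, List.mem_filter, decide_eq_true_eq]
    exact ⟨(hs e he).1, (hs e he).2⟩
  omega

lemma deg_two_aux {V : Type*} [Fintype V] (T : SimpleGraph V) [DecidableRel T.Adj]
    {s x y : V} (hx : T.Adj s x) (hy : T.Adj s y) (hxy : x ≠ y) : 2 ≤ T.degree s := by
  classical
  rw [← SimpleGraph.card_neighborFinset_eq_degree]
  have : ({x, y} : Finset V) ⊆ T.neighborFinset s := by
    intro z hz
    simp only [Finset.mem_insert, Finset.mem_singleton] at hz
    rcases hz with rfl | rfl <;> simp [hx, hy]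
  calc 2 = ({x, y} : Finset V).card := (Finset.card_pair hxy).symm
    _ ≤ _ := Finset.card_le_card this

lemma path_loop_nil {V : Type*} {G : SimpleGraph V} {v : V} (p : G.Walk v v)
    (hp : p.support.Nodup) : p.length = 0 := by
  have h : (⟨p, (Walk.isPath_def p).mpr hp⟩ : G.Path v v) = Path.nil := Path.loop_eq _
  have := congrArg (fun q : G.Path v v => q.1.length) h
  simpa using this

lemma main_aux {V : Type*} [Fintype V] {G : SimpleGraph V} (T : SimpleGraph V)
    [DecidableRel T.Adj]
    (v' : V) (S : Set V) (hv'S : v' ∉ S) (hT : T.IsTree)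
    (hdeg : ∀ s ∈ S, T.Adj v' s → T.degree s = 1)
    (a b : V) (haS : a ∈ S) (hbS : b ∈ S) (hab : a ≠ b)
    (q' : G.Walk a b) (hq'len : 2 ≤ q'.length)
    (hsup : (q'.support ++ [v']).Nodup)
    (hnd : (s(v', a) :: (q'.edges ++ [s(b, v')])).Nodup)
    (hnotC : s(a, b) ∉ (s(v', a) :: (q'.edges ++ [s(b, v')]))) :
    ((s(v', a) :: (q'.edges ++ [s(b, v')])).filter (fun e => e ∈ T.edgeSet)).length ≤
      (q'.length + 2) - 2 - (if T.Adj a b then 1 else 0) := by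
  classical
  have hva : v' ≠ a := fun h => hv'S (h ▸ haS)
  have hvb : v' ≠ b := fun h => hv'S (h ▸ hbS)
  -- decompose q' as a cons
  obtain ⟨a₂, ha₂, r₁, rfl⟩ : ∃ a₂, ∃ (h : G.Adj a a₂), ∃ (r₁ : G.Walk a₂ b),
      q' = Walk.cons h r₁ := by
    cases q' with
    | nil => simp at hq'len
    | cons h r => exact ⟨_, h, r, rfl⟩
  -- decompose it as a concat
  obtain ⟨b₂, r₂, hb₂, hq₂⟩ := Walk.exists_cons_eq_concat ha₂ r₁
  have hedges₂ : s(a, a₂) :: r₁.edges = r₂.edges ++ [s(b₂, b)] := by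
    have := congrArg Walk.edges hq₂
    simpa using this
  have hsupp₂ : a :: r₁.support = r₂.support ++ [b] := by
    have := congrArg Walk.support hq₂
    simpa using this
  -- support facts
  have hsup' : ((a :: r₁.support) ++ [v']).Nodup := by simpa using hsup
  obtain ⟨hndsup, -, hdisj⟩ := List.nodup_append'.mp hsup'
  have hv'sup : v' ∉ a :: r₁.support := fun h => hdisj h (by simp)
  have ha₂v : a₂ ≠ v' := by
    intro h
    exact hv'sup (h ▸ List.mem_cons_of_mem _ r₁.start_mem_support)
  have hb₂v : b₂ ≠ v' := by
    intro h
    apply hv'sup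
    rw [← h, hsupp₂]
    exact List.mem_append_left _ r₂.end_mem_support
  have ha₂b : a₂ ≠ b := by
    intro h
    subst h
    have h0 := path_loop_nil r₁ hndsup.of_cons
    simp [h0] at hq'len
  have hr₁len : 1 ≤ r₁.length := by
    simp at hq'len
    omega
  -- the ambient list
  set L : List (Sym2 V) :=
    s(v', a) :: ((Walk.cons ha₂ r₁).edges ++ [s(b, v')]) with hL
  have hLlen : L.length = r₁.length + 3 := by
    simp [hL, Walk.length_edges]
  -- memberships
  have hmE1 : s(v', a) ∈ L := List.mem_cons_self
  have hmE2 : s(b, v') ∈ L :=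
    List.mem_cons_of_mem _ (List.mem_append_right _ (by simp))
  have hmF1mid : s(a, a₂) ∈ (Walk.cons ha₂ r₁).edges := by simp
  have hmF2mid : s(b₂, b) ∈ (Walk.cons ha₂ r₁).edges := by
    rw [Walk.edges_cons, hedges₂]
    exact List.mem_append_right _ (by simp)
  have hmidL : ∀ e ∈ (Walk.cons ha₂ r₁).edges, e ∈ L :=
    fun e he => List.mem_cons_of_mem _ (List.mem_append_left _ he)
  -- no middle edge contains v'
  have hv'mid : ∀ e ∈ (Walk.cons ha₂ r₁).edges, v' ∉ e := by
    intro e he hv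
    rw [Sym2.mem_iff_exists] at hv
    obtain ⟨z, rfl⟩ := hv
    exact hv'sup (Walk.fst_mem_support_of_mem_edges _ he)
  -- distinctness facts
  have hE1E2 : s(v', a) ≠ s(b, v') := by
    rw [Ne, Sym2.eq_iff]
    rintro (⟨h1, h2⟩ | ⟨h1, h2⟩)
    · exact hvb h1
    · exact hab h2
  have hE1F1 : s(v', a) ≠ s(a, a₂) := by
    rw [Ne, Sym2.eq_iff]
    rintro (⟨h1, h2⟩ | ⟨h1, h2⟩)
    · exact hva h1
    · exact ha₂v h1.symm
  have hE2F2 : s(b, v') ≠ s(b₂, b) := by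
    rw [Ne, Sym2.eq_iff]
    rintro (⟨h1, h2⟩ | ⟨h1, h2⟩)
    · exact hvb h2
    · exact hb₂v h2.symm
  have hE2F1 : s(b, v') ≠ s(a, a₂) := by
    rw [Ne, Sym2.eq_iff]
    rintro (⟨h1, h2⟩ | ⟨h1, h2⟩)
    · exact hab h1.symm
    · exact hva h2
  have hF1F2 : s(a, a₂) ≠ s(b₂, b) := by
    rw [Ne, Sym2.eq_iff]
    rintro (⟨h1, h2⟩ | ⟨h1, h2⟩)
    · exact ha₂b h2
    · exact hab h1
  by_cases hTab : T.Adj a b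
  · -- there is a middle edge not in T
    have hmidT : ∃ e ∈ (Walk.cons ha₂ r₁).edges, e ∉ T.edgeSet := by
      by_contra hcon
      push_neg at hcon
      have hbr : T.IsBridge s(a, b) :=
        (isAcyclic_iff_forall_adj_isBridge.mp hT.IsAcyclic) hTab
      rw [isBridge_iff_adj_and_forall_walk_mem_edges] at hbr
      have hm := hbr ((Walk.cons ha₂ r₁).transfer T hcon)
      rw [Walk.edges_transfer] at hm
      exact hnotC (hmidL _ hm)
    obtain ⟨e, heM, heT⟩ := hmidT
    have hnE1 : s(v', a) ∉ T.edgeSet := by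
      rw [SimpleGraph.mem_edgeSet]
      intro h
      have hd := hdeg a haS h
      have := deg_two_aux T h.symm hTab hvb
      omega
    have hnE2 : s(b, v') ∉ T.edgeSet := by
      rw [SimpleGraph.mem_edgeSet]
      intro h
      have hd := hdeg b hbS h.symm
      have := deg_two_aux T h hTab.symm hva
      omega
    have hE1e : s(v', a) ≠ e := by
      intro h
      exact hv'mid e heM (h ▸ Sym2.mem_mk_left v' a)
    have hE2e : s(b, v') ≠ e := by
      intro h
      exact hv'mid e heM (h ▸ Sym2.mem_mk_right b v')
    have hcard : ({s(v', a), s(b, v'), e} : Finset (Sym2 V)).card = 3 := by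
      rw [Finset.card_insert_of_notMem (by simp [hE1E2, hE1e]),
        Finset.card_insert_of_notMem (by simp [hE2e]), Finset.card_singleton]
    have hkey := filter_count_aux hnd (fun e => e ∈ T.edgeSet)
      ({s(v', a), s(b, v'), e} : Finset (Sym2 V)) ?_
    · rw [hcard] at hkey
      rw [if_pos hTab]
      simp only [Walk.length_cons] at *
      omega
    · intro f hf
      simp only [Finset.mem_insert, Finset.mem_singleton] at hf
      rcases hf with rfl | rfl | rfl
      · exact ⟨hmE1, hnE1⟩
      · exact ⟨hmE2, hnE2⟩
      · exact ⟨hmidL _ heM, heT⟩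
  · -- two missing edges suffice
    have key : ∀ e₁ e₂ : Sym2 V, e₁ ∈ L → e₂ ∈ L → e₁ ≠ e₂ →
        e₁ ∉ T.edgeSet → e₂ ∉ T.edgeSet →
        ((L.filter (fun e => e ∈ T.edgeSet)).length ≤
          ((Walk.cons ha₂ r₁).length + 2) - 2 - (if T.Adj a b then 1 else 0)) := by
      intro e₁ e₂ m₁ m₂ hne n₁ n₂
      have hkey := filter_count_aux hnd (fun e => e ∈ T.edgeSet)
        ({e₁, e₂} : Finset (Sym2 V)) ?_
      · rw [Finset.card_pair hne] at hkey
        rw [if_neg hTab]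
        simp only [Walk.length_cons] at *
        omega
      · intro f hf
        simp only [Finset.mem_insert, Finset.mem_singleton] at hf
        rcases hf with rfl | rfl
        · exact ⟨m₁, n₁⟩
        · exact ⟨m₂, n₂⟩
    by_cases h1 : T.Adj v' a <;> by_cases h2 : T.Adj b v'
    · -- both cycle edges at v' in T : the two inner edges at a and b are missing
      have hnF1 : s(a, a₂) ∉ T.edgeSet := by
        rw [SimpleGraph.mem_edgeSet]
        intro h
        have hd := hdeg a haS h1
        have := deg_two_aux T h1.symm h (fun hh => ha₂v hh.symm)
        omega
      have hnF2 : s(b₂, b) ∉ T.edgeSet := by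
        rw [SimpleGraph.mem_edgeSet]
        intro h
        have hd := hdeg b hbS h2.symm
        have := deg_two_aux T h2 h.symm hb₂v.symm
        omega
      exact key _ _ (hmidL _ hmF1mid) (hmidL _ hmF2mid) hF1F2 hnF1 hnF2
    · exact key _ _ (hmidL _ hmF1mid) hmE2 (fun h => hE2F1 h.symm)
        (by rw [SimpleGraph.mem_edgeSet]; intro h
            have hd := hdeg a haS h1
            have := deg_two_aux T h1.symm h (fun hh => ha₂v hh.symm)
            omega)
        (by rw [SimpleGraph.mem_edgeSet]; exact h2)
    · have hnF2 : s(b₂, b) ∉ T.edgeSet := by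
        rw [SimpleGraph.mem_edgeSet]
        intro h
        have hd := hdeg b hbS h2.symm
        have := deg_two_aux T h2 h.symm hb₂v.symm
        omega
      exact key _ _ hmE1 (hmidL _ hmF2mid) (by
          rw [Ne, Sym2.eq_iff]
          rintro (⟨g1, g2⟩ | ⟨g1, g2⟩)
          · exact hb₂v g1.symm
          · exact hvb g1)
        (by rw [SimpleGraph.mem_edgeSet]; exact h1) hnF2
    · exact key _ _ hmE1 hmE2 hE1E2
        (by rw [SimpleGraph.mem_edgeSet]; exact h1)
        (by rw [SimpleGraph.mem_edgeSet]; exact h2)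

/-- **Proposition 1, validity of constraint (10).**
Let `G` be a finite simple graph with a distinguished vertex `v'` and a set `S`
of Steiner vertices not containing `v'`, and let `T` be a spanning tree of `G`
satisfying the degree-one condition (every Steiner vertex adjacent to `v'` in
`T` has degree exactly one in `T`).  Let `c` be a cycle of length `≥ 4` through
`v'` whose two edges incident to `v'` are `{v', sᵢ}` and `{v', sⱼ}` with
`sᵢ, sⱼ ∈ S` distinct, and suppose `{sᵢ, sⱼ}` is an edge of `G` not belonging
to `c`.  Then the number of edges of `c` belonging to `T` is at most
`|c| - 2 - [{sᵢ, sⱼ} ∈ T]`. -/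
theorem constraint_ten_valid {V : Type*} [Fintype V]
    (G T : SimpleGraph V) [DecidableRel T.Adj]
    (v' : V) (S : Set V) (hv'S : v' ∉ S)
    (hTG : T ≤ G) (hT : T.IsTree)
    (hdeg : ∀ s ∈ S, T.Adj v' s → T.degree s = 1)
    (s_i s_j : V) (hsi : s_i ∈ S) (hsj : s_j ∈ S) (hij : s_i ≠ s_j)
    (c : G.Walk v' v') (hc : c.IsCycle) (hlen : 4 ≤ c.length)
    (hei : s(v', s_i) ∈ c.edges) (hej : s(v', s_j) ∈ c.edges)
    (honly : ∀ e ∈ c.edges, v' ∈ e → e = s(v', s_i) ∨ e = s(v', s_j))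
    (hGij : G.Adj s_i s_j) (hnotC : s(s_i, s_j) ∉ c.edges) :
    (c.edges.filter (fun e => e ∈ T.edgeSet)).length ≤
      c.length - 2 - (if T.Adj s_i s_j then 1 else 0) := by
  classical
  have hvi : v' ≠ s_i := fun h => hv'S (h ▸ hsi)
  have hvj : v' ≠ s_j := fun h => hv'S (h ▸ hsj)
  -- peel off the first edge of the cycle
  obtain ⟨a, ha, q, rfl⟩ := Walk.not_nil_iff.mp
    (show ¬ c.Nil by rw [Walk.nil_iff_length_eq]; omega)
  -- peel off the last edge
  obtain ⟨x, hx, r, rfl⟩ := Walk.not_nil_iff.mp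
    (show ¬ q.Nil by
      rw [Walk.nil_iff_length_eq]
      simp only [Walk.length_cons] at hlen
      omega)
  obtain ⟨b, q', hb, hq⟩ := Walk.exists_cons_eq_concat hx r
  rw [hq] at hc hlen hei hej honly hnotC ⊢
  clear hq hei hej
  -- basic structural facts
  have hsup : (q'.support ++ [v']).Nodup := by
    have := hc.support_nodup
    simpa using this
  have hq'len : 2 ≤ q'.length := by
    simp only [Walk.length_cons, Walk.length_concat] at hlen
    omega
  have hE : (Walk.cons ha (q'.concat hb)).edges =
      s(v', a) :: (q'.edges ++ [s(b, v')]) := by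
    simp
  have hnd : (s(v', a) :: (q'.edges ++ [s(b, v')])).Nodup := by
    rw [← hE]; exact hc.isCircuit.isTrail.edges_nodup
  rw [hE] at honly hnotC ⊢
  have hlen' : (Walk.cons ha (q'.concat hb)).length = q'.length + 2 := by
    simp [Walk.length_concat]
  rw [hlen']
  -- identify the endpoints a and b
  have hab : a ≠ b := by
    intro h
    subst h
    have h0 := path_loop_nil q' (List.nodup_append.mp hsup).1
    omega
  have haid : a = s_i ∨ a = s_j := by
    have h := honly s(v', a) List.mem_cons_self (Sym2.mem_mk_left _ _)
    rcases h with h | h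
    · left
      rcases Sym2.eq_iff.mp h with ⟨-, h2⟩ | ⟨h1, -⟩
      · exact h2
      · exact absurd h1 hvi
    · right
      rcases Sym2.eq_iff.mp h with ⟨-, h2⟩ | ⟨h1, -⟩
      · exact h2
      · exact absurd h1 hvj
  have hbid : b = s_i ∨ b = s_j := by
    have h := honly s(b, v')
      (List.mem_cons_of_mem _ (List.mem_append_right _ (by simp)))
      (Sym2.mem_mk_right _ _)
    rcases h with h | h
    · left
      rcases Sym2.eq_iff.mp h with ⟨-, h2⟩ | ⟨h1, -⟩
      · exact absurd h2 hvi
      · exact h1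
    · right
      rcases Sym2.eq_iff.mp h with ⟨-, h2⟩ | ⟨h1, -⟩
      · exact absurd h2 hvj
      · exact h1
  rcases haid with rfl | rfl <;> rcases hbid with rfl | rfl
  · exact absurd rfl hab
  · exact main_aux T v' S hv'S hT hdeg a b hsi hsj hab q' hq'len hsup hnd hnotC
  · have hswap : (if T.Adj b a then 1 else 0) = (if T.Adj a b then 1 else 0) := by
      by_cases h : T.Adj a b
      · rw [if_pos h, if_pos h.symm]
      · rw [if_neg h, if_neg (fun hh => h hh.symm)]
    rw [hswap]
    exact main_aux T v' S hv'S hT hdeg a b hsj hsi hab q' hq'len hsup hnd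
      (by rw [show s(a, b) = s(b, a) from Sym2.eq_swap]; exact hnotC)
  · exact absurd rfl hab
end

section
/- Let G' be a finite simple graph with a distinguished vertex v' and a set S of Steiner vertices not containing v', and let T' be a spanning tree of G' satisfying the degree-one condition. Let C be a cycle in G' of length |C| ≥ 4 passing through v' whose two edges incident to v' are {v', s_i} and {v', s_j} for distinct Steiner vertices s_i, s_j ∈ S. Then the number of edges of C that belong to T' is at most |C| − 2. -/
open SimpleGraph

namespace CycleProofAux

open SimpleGraph.Walk

variable {V : Type*} {G : SimpleGraph V}

lemma edge_at_start_of_isPath {w x u : V} (h : G.Adj w u) (p : G.Walk u x)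
    (hp : (Walk.cons h p).IsPath) {e : Sym2 V} (he : e ∈ (Walk.cons h p).edges)
    (hw : w ∈ e) : e = s(w, u) := by
  rw [Walk.edges_cons, List.mem_cons] at he
  rcases he with rfl | he
  · rfl
  · exfalso
    rw [Walk.cons_isPath_iff] at hp
    induction e with
    | _ a b =>
      rcases Sym2.mem_iff.mp hw with rfl | rfl
      · exact hp.2 (p.fst_mem_support_of_mem_edges he)
      · exact hp.2 (p.snd_mem_support_of_mem_edges he)

/-- In a cycle based at `w`, there are exactly two edges through `w`. -/
lemma cycle_edges_at_start {w : V} (c : G.Walk w w) (hc : c.IsCycle) :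
    ∃ a b, a ≠ b ∧ s(w, a) ∈ c.edges ∧ s(w, b) ∈ c.edges ∧
      ∀ e ∈ c.edges, w ∈ e → e = s(w, a) ∨ e = s(w, b) := by
  obtain ⟨a, h, q, rfl⟩ := Walk.not_nil_iff.mp hc.not_nil
  obtain ⟨hqp, hne⟩ := (Walk.cons_isCycle_iff q h).mp hc
  obtain ⟨b, h', q', hrev⟩ := (Walk.not_nil_iff (p := q.reverse)).mp
    (Walk.not_nil_of_ne h.ne)
  have hbq : s(w, b) ∈ q.edges := by
    have : s(w, b) ∈ q.reverse.edges := by rw [hrev]; simp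
    rwa [Walk.edges_reverse, List.mem_reverse] at this
  have hab : a ≠ b := by
    rintro rfl
    exact hne hbq
  refine ⟨a, b, hab, by simp, by simp [hbq], ?_⟩
  intro e he hw
  rw [Walk.edges_cons, List.mem_cons] at he
  rcases he with rfl | he
  · exact Or.inl rfl
  · right
    have hp' : (Walk.cons h' q').IsPath := hrev ▸ hqp.reverse
    have he' : e ∈ (Walk.cons h' q').edges := by
      rw [← hrev, Walk.edges_reverse, List.mem_reverse]; exact he
    exact edge_at_start_of_isPath h' q' hp' he' hw

/-- The "other" edge of the cycle at a vertex `t` adjacent to the base point `v'`. -/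
lemma other_edge {v' : V} (c : G.Walk v' v') (hc : c.IsCycle) {t : V}
    (hmem : s(v', t) ∈ c.edges) :
    ∃ x, x ≠ v' ∧ s(t, x) ∈ c.edges ∧
      ∀ e ∈ c.edges, t ∈ e → e = s(t, v') ∨ e = s(t, x) := by
  classical
  have hs : t ∈ c.support := c.snd_mem_support_of_mem_edges hmem
  obtain ⟨a, b, hab, ha, hb, honly⟩ := cycle_edges_at_start (c.rotate t hs) (hc.rotate hs)
  have hiff : ∀ e : Sym2 V, e ∈ (c.rotate t hs).edges ↔ e ∈ c.edges :=
    fun e => (c.rotate_edges t hs).mem_iff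
  have hm : s(t, v') ∈ (c.rotate t hs).edges := (hiff _).mpr (by rwa [Sym2.eq_swap])
  rcases honly _ hm (Sym2.mem_mk_left _ _) with heq | heq
  · have hva : v' = a := Sym2.congr_right.mp heq
    subst hva
    refine ⟨b, fun hbv => hab hbv.symm, (hiff _).mp hb, ?_⟩
    intro e he hw
    exact honly e ((hiff e).mpr he) hw
  · have hvb : v' = b := Sym2.congr_right.mp heq
    subst hvb
    refine ⟨a, fun hav => hab hav, (hiff _).mp ha, ?_⟩
    intro e he hw
    exact (honly e ((hiff e).mpr he) hw).symm

/-- Auxiliary triangle lemma, assuming the first step of the cycle is `v' → si`. -/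
lemma length_eq_three_aux {v' si sj : V} (hvi : v' ≠ si) (hvj : v' ≠ sj)
    (h : G.Adj v' si) (q : G.Walk si v') (hc : (Walk.cons h q).IsCycle)
    (h2 : ∀ e ∈ (Walk.cons h q).edges, si ∈ e → e = s(v', si) ∨ e = s(si, sj))
    (h3 : ∀ e ∈ (Walk.cons h q).edges, sj ∈ e → e = s(v', sj) ∨ e = s(si, sj)) :
    (Walk.cons h q).length = 3 := by
  obtain ⟨u2, h2', q2, rfl⟩ := (Walk.not_nil_iff (p := q)).mp
    (Walk.not_nil_of_ne (Ne.symm hvi))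
  have hnodup := hc.edges_nodup
  have he2 : s(si, u2) ∈ (Walk.cons h (Walk.cons h2' q2)).edges := by simp
  rcases h2 _ he2 (Sym2.mem_mk_left _ _) with heq2 | heq2
  · exfalso
    simp only [Walk.edges_cons, List.nodup_cons] at hnodup
    exact hnodup.1 (by rw [List.mem_cons]; left; rw [← heq2, Sym2.eq_swap])
  · have hu2 : sj = u2 := (Sym2.congr_right.mp heq2).symm
    subst hu2
    obtain ⟨u3, h3', q3, rfl⟩ := (Walk.not_nil_iff (p := q2)).mp
      (Walk.not_nil_of_ne (Ne.symm hvj))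
    have he3 : s(sj, u3) ∈ (Walk.cons h (Walk.cons h2' (Walk.cons h3' q3))).edges := by simp
    rcases h3 _ he3 (Sym2.mem_mk_left _ _) with heq3 | heq3
    · -- third edge is s(v', sj): then u3 = v'
      have hu3 : v' = u3 := by
        have : s(sj, u3) = s(sj, v') := by rw [heq3, Sym2.eq_swap]
        exact (Sym2.congr_right.mp this).symm
      subst hu3
      -- q3 : Walk v' v' with nodup support, hence nil
      have hsup := hc.support_nodup
      simp only [Walk.support_cons, List.tail_cons, List.nodup_cons] at hsup
      have hq3nodup : q3.support.Nodup := hsup.2.2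
      have hq3path : q3.IsPath := Walk.IsPath.mk' hq3nodup
      have : (⟨q3, hq3path⟩ : G.Path v' v') = Path.nil := Path.loop_eq _
      have hq3nil : q3 = Walk.nil := congrArg Subtype.val this
      subst hq3nil
      simp
    · exfalso
      -- third edge equals second edge: contradicts nodup
      simp only [Walk.edges_cons, List.nodup_cons] at hnodup
      exact hnodup.2.1 (by rw [List.mem_cons]; left; rw [heq3])

/-- If every edge of the cycle through `v'`, `si`, `sj` is one of the three edges of the
triangle `v' si sj`, then the cycle has length 3. -/
lemma cycle_length_eq_three {v' si sj : V} (hvi : v' ≠ si) (hvj : v' ≠ sj) (hij : si ≠ sj)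
    (c : G.Walk v' v') (hc : c.IsCycle)
    (h1 : ∀ e ∈ c.edges, v' ∈ e → e = s(v', si) ∨ e = s(v', sj))
    (h2 : ∀ e ∈ c.edges, si ∈ e → e = s(v', si) ∨ e = s(si, sj))
    (h3 : ∀ e ∈ c.edges, sj ∈ e → e = s(v', sj) ∨ e = s(si, sj)) :
    c.length = 3 := by
  obtain ⟨a, h, q, rfl⟩ := Walk.not_nil_iff.mp hc.not_nil
  have hfirst : s(v', a) ∈ (Walk.cons h q).edges := by simp
  rcases h1 _ hfirst (Sym2.mem_mk_left _ _) with heq | heq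
  · have ha : a = si := Sym2.congr_right.mp heq
    subst ha
    exact length_eq_three_aux hvi hvj h q hc h2 h3
  · have ha : a = sj := Sym2.congr_right.mp heq
    subst ha
    refine length_eq_three_aux hvj hvi h q hc ?_ ?_
    · intro e he hw
      rcases h3 e he hw with h' | h'
      · exact Or.inl h'
      · exact Or.inr (by rw [h', Sym2.eq_swap])
    · intro e he hw
      rcases h2 e he hw with h' | h'
      · exact Or.inl h'
      · exact Or.inr (by rw [h', Sym2.eq_swap])

/-- Counting: if two distinct elements of a duplicate-free list fail the predicate,
the filtered list loses at least two elements. -/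
lemma length_filter_le_of_two_not {α : Type*} [DecidableEq α] {l : List α} (hn : l.Nodup)
    (p : α → Bool) {e₁ e₂ : α} (h12 : e₁ ≠ e₂) (h1 : e₁ ∈ l) (h2 : e₂ ∈ l)
    (hp1 : ¬ p e₁) (hp2 : ¬ p e₂) :
    (l.filter p).length ≤ l.length - 2 := by
  have hsplit := l.length_eq_length_filter_add p
  have hm1 : e₁ ∈ l.filter (fun a => !p a) := by
    rw [List.mem_filter]; exact ⟨h1, by simpa using hp1⟩
  have hm2 : e₂ ∈ l.filter (fun a => !p a) := by
    rw [List.mem_filter]; exact ⟨h2, by simpa using hp2⟩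
  have hnd : (l.filter (fun a => !p a)).Nodup := hn.filter _
  have hcard : 2 ≤ (l.filter (fun a => !p a)).length := by
    have hsub : ({e₁, e₂} : Finset α) ⊆ (l.filter (fun a => !p a)).toFinset := by
      intro x hx
      simp only [Finset.mem_insert, Finset.mem_singleton] at hx
      rcases hx with rfl | rfl
      · exact List.mem_toFinset.mpr hm1
      · exact List.mem_toFinset.mpr hm2
    have := Finset.card_le_card hsub
    rwa [Finset.card_pair h12, List.toFinset_card_of_nodup hnd] at this
  omega

end CycleProofAux

open CycleProofAux in
/-- **second step of the proof of Proposition 1.**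
Let `G` be a finite simple graph with a distinguished vertex `v'` and a set `S`
of Steiner vertices not containing `v'`, and let `T` be a spanning tree of `G`
satisfying the degree-one condition.  Let `c` be a cycle of length `≥ 4`
through `v'` whose two edges incident to `v'` are `{v', sᵢ}` and `{v', sⱼ}`
with `sᵢ, sⱼ ∈ S` distinct.  Then the number of edges of `c` belonging to `T`
is at most `|c| - 2`. -/
theorem cycle_edges_in_tree_le_sub_two {V : Type*} [Fintype V]
    (G T : SimpleGraph V) [DecidableRel T.Adj]
    (v' : V) (S : Set V) (hv'S : v' ∉ S)
    (hTG : T ≤ G) (hT : T.IsTree)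
    (hdeg : ∀ s ∈ S, T.Adj v' s → T.degree s = 1)
    (s_i s_j : V) (hsi : s_i ∈ S) (hsj : s_j ∈ S) (hij : s_i ≠ s_j)
    (c : G.Walk v' v') (hc : c.IsCycle) (hlen : 4 ≤ c.length)
    (hei : s(v', s_i) ∈ c.edges) (hej : s(v', s_j) ∈ c.edges)
    (honly : ∀ e ∈ c.edges, v' ∈ e → e = s(v', s_i) ∨ e = s(v', s_j)) :
    (c.edges.filter (fun e => e ∈ T.edgeSet)).length ≤ c.length - 2 := by
  classical
  have hvi : v' ≠ s_i := fun h => hv'S (h ▸ hsi)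
  have hvj : v' ≠ s_j := fun h => hv'S (h ▸ hsj)
  obtain ⟨x, hxv, hxe, honx⟩ := other_edge c hc hei
  obtain ⟨y, hyv, hye, hony⟩ := other_edge c hc hej
  -- if an edge {v', s} with s ∈ S is in T, then the other cycle edge at s is not in T
  have hmiss : ∀ s z : V, s ∈ S → z ≠ v' → T.Adj v' s → s(s, z) ∉ T.edgeSet := by
    intro s z hsS hzv hadj hmem
    have hdeg1 := hdeg s hsS hadj
    have h1 : v' ∈ T.neighborFinset s := by
      rw [SimpleGraph.mem_neighborFinset]; exact hadj.symm
    have h2 : z ∈ T.neighborFinset s := by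
      rw [SimpleGraph.mem_neighborFinset]; exact (SimpleGraph.mem_edgeSet T).mp hmem
    have : 1 < T.degree s := by
      rw [SimpleGraph.degree]
      exact Finset.one_lt_card.mpr ⟨v', h1, z, h2, fun h => hzv h.symm⟩
    omega
  -- the key distinctness: the two "other" edges cannot coincide
  have hkey : s(s_i, x) ≠ s(s_j, y) := by
    intro heq
    rcases Sym2.eq_iff.mp heq with ⟨h', _⟩ | ⟨hxy1, hxy2⟩
    · exact hij h'
    · subst hxy1
      -- now s(s_i, s_j) ∈ c.edges via hxe with x = s_j
      subst hxy2
      have h3 : c.length = 3 := cycle_length_eq_three hvi hvj hij c hc honly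
        (fun e he hw => by
          rcases honx e he hw with h' | h'
          · exact Or.inl (by rw [h', Sym2.eq_swap])
          · exact Or.inr h')
        (fun e he hw => by
          rcases hony e he hw with h' | h'
          · exact Or.inl (by rw [h', Sym2.eq_swap])
          · exact Or.inr (by rw [h', Sym2.eq_swap]))
      omega
  -- produce two distinct cycle edges not in T
  obtain ⟨e₁, e₂, h12, hm1, hm2, hn1, hn2⟩ :
      ∃ e₁ e₂ : Sym2 V, e₁ ≠ e₂ ∧ e₁ ∈ c.edges ∧ e₂ ∈ c.edges ∧
        e₁ ∉ T.edgeSet ∧ e₂ ∉ T.edgeSet := by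
    by_cases hTi : s(v', s_i) ∈ T.edgeSet <;>
      by_cases hTj : s(v', s_j) ∈ T.edgeSet
    · -- both incident edges in T: the two other edges are out
      refine ⟨s(s_i, x), s(s_j, y), hkey, hxe, hye, ?_, ?_⟩
      · exact hmiss s_i x hsi hxv ((SimpleGraph.mem_edgeSet T).mp hTi)
      · exact hmiss s_j y hsj hyv ((SimpleGraph.mem_edgeSet T).mp hTj)
    · refine ⟨s(s_i, x), s(v', s_j), ?_, hxe, hej, ?_, hTj⟩
      · intro h
        have : v' ∈ s(s_i, x) := h ▸ Sym2.mem_mk_left _ _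
        rcases Sym2.mem_iff.mp this with h' | h'
        · exact hvi h'
        · exact hxv h'.symm
      · exact hmiss s_i x hsi hxv ((SimpleGraph.mem_edgeSet T).mp hTi)
    · refine ⟨s(v', s_i), s(s_j, y), ?_, hei, hye, hTi, ?_⟩
      · intro h
        have : v' ∈ s(s_j, y) := h ▸ Sym2.mem_mk_left _ _
        rcases Sym2.mem_iff.mp this with h' | h'
        · exact hvj h'
        · exact hyv h'.symm
      · exact hmiss s_j y hsj hyv ((SimpleGraph.mem_edgeSet T).mp hTj)
    · exact ⟨s(v', s_i), s(v', s_j), fun h => hij (Sym2.congr_right.mp h), hei, hej, hTi, hTj⟩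
  have := length_filter_le_of_two_not (hc.edges_nodup)
    (fun e => decide (e ∈ T.edgeSet)) h12 hm1 hm2 (by simpa using hn1) (by simpa using hn2)
  rwa [Walk.length_edges] at this
end

section
/- Let G' be a finite simple graph with a distinguished vertex v' and a set S of Steiner vertices not containing v', and let T' be a spanning tree of G' satisfying the degree-one condition. Let C be a cycle in G' of length |C| ≥ 4 passing through v' whose two edges incident to v' are {v', s_i} and {v', s_j} for distinct Steiner vertices s_i, s_j ∈ S, such that {s_i, s_j} is an edge of G' not belonging to C. If the number of edges of C belonging to T' equals |C| − 2, then the edge {s_i, s_j} does not belong to T'. -/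
open SimpleGraph

/-- **final case analysis in the proof of Proposition 1.**
With `G`, `v'`, `S`, `T` and the cycle `c` as in Proposition 1 (length `≥ 4`,
through `v'`, its two edges incident to `v'` being `{v', sᵢ}` and `{v', sⱼ}`
for distinct Steiner vertices `sᵢ, sⱼ ∈ S`, and `{sᵢ, sⱼ}` an edge of `G` not
belonging to `c`): if the number of edges of `c` belonging to `T` equals
`|c| - 2`, then the edge `{sᵢ, sⱼ}` does not belong to `T`. -/
theorem tight_case_forces_edge_out {V : Type*} [Fintype V]
    (G T : SimpleGraph V) [DecidableRel T.Adj]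
    (v' : V) (S : Set V) (hv'S : v' ∉ S)
    (hTG : T ≤ G) (hT : T.IsTree)
    (hdeg : ∀ s ∈ S, T.Adj v' s → T.degree s = 1)
    (s_i s_j : V) (hsi : s_i ∈ S) (hsj : s_j ∈ S) (hij : s_i ≠ s_j)
    (c : G.Walk v' v') (hc : c.IsCycle) (hlen : 4 ≤ c.length)
    (hei : s(v', s_i) ∈ c.edges) (hej : s(v', s_j) ∈ c.edges)
    (honly : ∀ e ∈ c.edges, v' ∈ e → e = s(v', s_i) ∨ e = s(v', s_j))
    (hGij : G.Adj s_i s_j) (hnotC : s(s_i, s_j) ∉ c.edges)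
    (heq : (c.edges.filter (fun e => e ∈ T.edgeSet)).length = c.length - 2) :
    ¬ T.Adj s_i s_j := by
  intro hTij
  have hne_i : v' ≠ s_i := fun h => hv'S (h ▸ hsi)
  have hne_j : v' ≠ s_j := fun h => hv'S (h ▸ hsj)
  -- neither edge {v', s_i} nor {v', s_j} is in T, by the degree-one condition
  have hno : ∀ s t : V, s ∈ S → T.Adj s t → t ≠ v' → ¬ T.Adj v' s := by
    intro s t hs hst htv hvs
    have h1 := hdeg s hs hvs
    have h2 : 1 < T.degree s := by
      rw [← SimpleGraph.card_neighborFinset_eq_degree]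
      refine Finset.one_lt_card.mpr ⟨v', ?_, t, ?_, fun h => htv h.symm⟩
      · simp [hvs.symm]
      · simp [hst]
    omega
  have hniT : s(v', s_i) ∉ T.edgeSet := fun h =>
    hno s_i s_j hsi hTij hne_j.symm (T.mem_edgeSet.mp h)
  have hnjT : s(v', s_j) ∉ T.edgeSet := fun h =>
    hno s_j s_i hsj hTij.symm hne_i.symm (T.mem_edgeSet.mp h)
  have hcnodup : c.edges.Nodup := hc.1.1.edges_nodup
  have he1e2 : s(v', s_i) ≠ s(v', s_j) := by
    simp [Sym2.eq, Sym2.rel_iff', hij, hne_j]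
  -- every edge of c not in T is one of the two edges at v'
  have h2 : ∀ e ∈ c.edges, e ∉ T.edgeSet → e = s(v', s_i) ∨ e = s(v', s_j) := by
    have hlentot := List.length_eq_length_filter_add (l := c.edges)
      (fun e => decide (e ∈ T.edgeSet))
    have hce : c.edges.length = c.length := c.length_edges
    set m := c.edges.filter (fun e => !decide (e ∈ T.edgeSet)) with hmdef
    have hm : m.length = 2 := by omega
    have hmem : ∀ e, e ∈ m ↔ e ∈ c.edges ∧ e ∉ T.edgeSet := by
      intro e; simp [hmdef, List.mem_filter]
    have hmnd : m.Nodup := hcnodup.filter _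
    have h1m : s(v', s_i) ∈ m := (hmem _).mpr ⟨hei, hniT⟩
    have h2m : s(v', s_j) ∈ m := (hmem _).mpr ⟨hej, hnjT⟩
    intro e hec heT
    have hem : e ∈ m := (hmem _).mpr ⟨hec, heT⟩
    obtain ⟨a, b, hab⟩ : ∃ a b, m = [a, b] := by
      match m, hm with
      | [a, b], _ => exact ⟨a, b, rfl⟩
    rw [hab] at h1m h2m hem
    simp only [List.mem_cons, List.mem_singleton, List.not_mem_nil, or_false] at h1m h2m hem
    rcases h1m with h1 | h1 <;> rcases h2m with hb | hb <;>
      rcases hem with he | he <;> simp_all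
  -- decompose the cycle
  cases c with
  | nil => simp at hlen
  | @cons _ x _ hadj p =>
    have hc' := (Walk.cons_isCycle_iff p hadj).mp hc
    have hxv : x ≠ v' := fun h => (h ▸ hadj).ne' rfl
    have hxmem : s(v', x) ∈ (Walk.cons hadj p).edges := by simp
    have hx : x = s_i ∨ x = s_j := by
      rcases honly _ hxmem (by simp) with h | h <;> [left; right] <;>
        exact Sym2.congr_right.mp h
    obtain ⟨y, hay, q, hq⟩ := Walk.exists_eq_cons_of_ne (Ne.symm hxv) p.reverse
    have hyrev : s(v', y) ∈ p.reverse.edges := by rw [hq]; simp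
    have hyp : s(v', y) ∈ p.edges := by
      rwa [Walk.edges_reverse, List.mem_reverse] at hyrev
    have hyc : s(v', y) ∈ (Walk.cons hadj p).edges := by simp [hyp]
    have hy : y = s_i ∨ y = s_j := by
      rcases honly _ hyc (by simp) with h | h <;> [left; right] <;>
        exact Sym2.congr_right.mp h
    have hyx : y ≠ x := by
      rintro rfl
      exact hc'.2 hyp
    have hTyx : T.Adj y x := by
      rcases hx with rfl | rfl <;> rcases hy with rfl | rfl
      · exact absurd rfl hyx
      · exact hTij.symm
      · exact hTij
      · exact absurd rfl hyx
    -- p.edges are nodup, hence so are p.reverse.edges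
    have hpnd : p.edges.Nodup := by
      have := hcnodup
      rw [Walk.edges_cons, List.nodup_cons] at this
      exact this.2
    have hrevnd : p.reverse.edges.Nodup := by
      rw [Walk.edges_reverse]; exact List.nodup_reverse.mpr hpnd
    have hynotq : s(v', y) ∉ q.edges := by
      have := hrevnd
      rw [hq, Walk.edges_cons, List.nodup_cons] at this
      exact this.1
    -- all edges of q lie in T
    have hsub : ∀ e ∈ q.edges, e ∈ T.edgeSet := by
      intro e he
      have hep : e ∈ p.edges := by
        have : e ∈ p.reverse.edges := by rw [hq]; simp [he]
        rwa [Walk.edges_reverse, List.mem_reverse] at this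
      have hec : e ∈ (Walk.cons hadj p).edges := by simp [hep]
      by_contra heT
      have hnex : e ≠ s(v', x) := by
        rintro rfl; exact hc'.2 hep
      have hney : e ≠ s(v', y) := by
        rintro rfl; exact hynotq he
      rcases h2 e hec heT with h | h <;>
        rcases hx with rfl | rfl <;> rcases hy with rfl | rfl <;>
          first
          | exact absurd rfl hyx
          | exact hnex h
          | exact hney h
    have hqpath : q.IsPath := by
      have hrev : p.reverse.IsPath := hc'.1.reverse
      rw [hq] at hrev
      exact hrev.of_cons
    let qT : T.Walk y x := q.transfer T hsub
    have hqTpath : qT.IsPath := hqpath.transfer hsub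
    have hsingle : (Walk.cons hTyx Walk.nil).IsPath := by
      simp [Walk.cons_isPath_iff, hyx]
    have hpeq := hT.IsAcyclic.path_unique ⟨qT, hqTpath⟩ ⟨Walk.cons hTyx Walk.nil, hsingle⟩
    have hlq : qT.length = 1 := by
      have := congrArg (fun r : T.Path y x => r.1.length) hpeq
      simpa using this
    have hql : q.length = 1 := by
      rwa [Walk.length_transfer] at hlq
    have hp1 : p.reverse.length = q.length + 1 := by rw [hq, Walk.length_cons]
    have hp2 : p.reverse.length = p.length := Walk.length_reverse p
    have hc1 : (Walk.cons hadj p).length = p.length + 1 := Walk.length_cons _ _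
    omega
end

section
/- Let G' be a finite simple graph with a distinguished vertex v' and a set S of Steiner vertices not containing v', and let T' be a spanning tree of G' satisfying the degree-one condition. Let s_i, s_j ∈ S be distinct Steiner vertices such that v', s_i, s_j form a triangle in G' (all three pairwise edges {v', s_i}, {v', s_j}, {s_i, s_j} are edges of G'). If the edge {s_i, s_j} belongs to T', then neither {v', s_i} nor {v', s_j} belongs to T'. (This is the validity of the triangle constraint (11).) -/
open SimpleGraph

/-- **validity of the triangle constraint (11).**
Let `G` be a finite simple graph with a distinguished vertex `v'` and a set `S`
of Steiner vertices not containing `v'`, and let `T` be a spanning tree of `G`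
satisfying the degree-one condition.  Let `sᵢ, sⱼ ∈ S` be distinct Steiner
vertices such that `v'`, `sᵢ`, `sⱼ` form a triangle in `G`.  If the edge
`{sᵢ, sⱼ}` belongs to `T`, then neither `{v', sᵢ}` nor `{v', sⱼ}` belongs to
`T`. -/
theorem triangle_constraint_valid {V : Type*} [Fintype V]
    (G T : SimpleGraph V) [DecidableRel T.Adj]
    (v' : V) (S : Set V) (hv'S : v' ∉ S)
    (hTG : T ≤ G) (hT : T.IsTree)
    (hdeg : ∀ s ∈ S, T.Adj v' s → T.degree s = 1)
    (s_i s_j : V) (hsi : s_i ∈ S) (hsj : s_j ∈ S) (hij : s_i ≠ s_j)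
    (htri₁ : G.Adj v' s_i) (htri₂ : G.Adj v' s_j) (htri₃ : G.Adj s_i s_j)
    (hTij : T.Adj s_i s_j) :
    ¬ T.Adj v' s_i ∧ ¬ T.Adj v' s_j := by
  have key : ∀ s t : V, s ∈ S → t ≠ v' → T.Adj s t → ¬ T.Adj v' s := by
    intro s t hs htv hst hvs
    have hdeg1 := hdeg s hs hvs
    have h2 : 1 < T.degree s := by
      rw [← SimpleGraph.card_neighborFinset_eq_degree]
      apply Finset.one_lt_card.2
      exact ⟨v', by simpa using hvs.symm, t, by simpa using hst, fun h => htv h.symm⟩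
    omega
  exact ⟨key s_i s_j hsi (fun h => hv'S (h ▸ hsj)) hTij,
    key s_j s_i hsj (fun h => hv'S (h ▸ hsi)) hTij.symm⟩
end
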